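/- If the boundaries of the convex hulls of two triangles A and B (six points in general position) intersect in four or more points, then there is no crossing-free drawing consisting of a spanning tree on A and a spanning tree on B. -/

import Mathlib

noncomputable def det3 (p q r : ℝ × ℝ) : ℝ :=
  (q.1 - p.1) * (r.2 - p.2) - (q.2 - p.2) * (r.1 - p.1)

lemma det3_cyclic (p q r : ℝ × ℝ) : det3 p q r = det3 q r p := by
  simp only [det3]; ring

lemma det3_combo (p q x y : ℝ × ℝ) (t : ℝ) :
    det3 p q ((1 - t) • x + t • y) = (1 - t) * det3 p q x + t * det3 p q y := by
  simp only [det3, Prod.smul_fst, Prod.smul_snd, Prod.fst_add, Prod.snd_add, smul_eq_mul]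
  ring

lemma det3_left (p q : ℝ × ℝ) : det3 p q p = 0 := by simp only [det3]; ring
lemma det3_right (p q : ℝ × ℝ) : det3 p q q = 0 := by simp only [det3]; ring

lemma seg_param {x y z : ℝ × ℝ} (h : z ∈ segment ℝ x y) :
    ∃ t : ℝ, 0 ≤ t ∧ t ≤ 1 ∧ z = (1 - t) • x + t • y := by
  rw [segment_eq_image] at h
  obtain ⟨t, ht, rfl⟩ := h
  exact ⟨t, ht.1, ht.2, rfl⟩

lemma seg_mem {x y : ℝ × ℝ} {t : ℝ} (h0 : 0 ≤ t) (h1 : t ≤ 1) :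
    (1 - t) • x + t • y ∈ segment ℝ x y := by
  rw [segment_eq_image]
  exact ⟨t, ⟨h0, h1⟩, rfl⟩

lemma collinear_of_det3 {p q r : ℝ × ℝ} (h : det3 p q r = 0) :
    Collinear ℝ ({p, q, r} : Set (ℝ × ℝ)) := by
  by_cases hpq : p = q
  · subst hpq
    rw [Set.insert_idem]
    exact collinear_pair ℝ p r
  · rw [collinear_iff_of_mem (Set.mem_insert p {q, r})]
    refine ⟨q - p, ?_⟩
    intro x hx
    rcases hx with rfl | rfl | rfl
    · exact ⟨0, by simp⟩
    · exact ⟨1, by simp⟩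
    · simp only [det3] at h
      by_cases h1 : q.1 - p.1 = 0
      · have h2 : q.2 - p.2 ≠ 0 := by
          intro h3; exact hpq (Prod.ext (by linarith) (by linarith))
        have h3 : x.1 - p.1 = 0 := by
          have h4 : (q.2 - p.2) * (x.1 - p.1) = 0 := by
            linear_combination (x.2 - p.2) * h1 - h
          rcases mul_eq_zero.1 h4 with h5 | h5
          · exact absurd h5 h2
          · exact h5
        refine ⟨(x.2 - p.2) / (q.2 - p.2), ?_⟩
        simp only [vadd_eq_add]
        refine Prod.ext ?_ ?_ <;>
          simp only [Prod.fst_add, Prod.snd_add, Prod.smul_fst, Prod.smul_snd,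
            Prod.fst_sub, Prod.snd_sub, smul_eq_mul]
        · rw [h1]; simp; linarith
        · field_simp; ring
      · refine ⟨(x.1 - p.1) / (q.1 - p.1), ?_⟩
        simp only [vadd_eq_add]
        have h3 : x.2 - p.2 = (x.1 - p.1) / (q.1 - p.1) * (q.2 - p.2) := by
          field_simp
          linear_combination h
        refine Prod.ext ?_ ?_ <;>
          simp only [Prod.fst_add, Prod.snd_add, Prod.smul_fst, Prod.smul_snd,
            Prod.fst_sub, Prod.snd_sub, smul_eq_mul]
        · field_simp; ring
        · linarith [h3]

lemma bary_sum (A B C r : ℝ × ℝ) :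
    det3 r B C + det3 A r C + det3 A B r = det3 A B C := by
  simp only [det3]; ring

lemma bary_fst (A B C r : ℝ × ℝ) :
    det3 r B C * A.1 + det3 A r C * B.1 + det3 A B r * C.1 = det3 A B C * r.1 := by
  simp only [det3]; ring

lemma bary_snd (A B C r : ℝ × ℝ) :
    det3 r B C * A.2 + det3 A r C * B.2 + det3 A B r * C.2 = det3 A B C * r.2 := by
  simp only [det3]; ring

lemma mem_segment_of_dets {A B C r : ℝ × ℝ} (hD : 0 < det3 A B C)
    (h3 : det3 A B r = 0) (h1 : 0 ≤ det3 r B C) (h2 : 0 ≤ det3 A r C) :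
    r ∈ segment ℝ A B := by
  have hsum := bary_sum A B C r
  have hf := bary_fst A B C r
  have hs := bary_snd A B C r
  rw [h3] at hsum hf hs
  have hD' : det3 A B C ≠ 0 := ne_of_gt hD
  refine ⟨det3 r B C / det3 A B C, det3 A r C / det3 A B C,
    div_nonneg h1 hD.le, div_nonneg h2 hD.le, ?_, ?_⟩
  · field_simp; linarith
  · refine Prod.ext ?_ ?_ <;>
      simp only [Prod.fst_add, Prod.snd_add, Prod.smul_fst, Prod.smul_snd, smul_eq_mul]
    · field_simp; linear_combination hf
    · field_simp; linear_combination hs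

lemma no_exit {w b1 b2 a1 q1 : ℝ × ℝ}
    (hD : 0 < det3 b1 b2 w)
    (hA : 0 < det3 b1 b2 a1)
    (hq0 : det3 b1 b2 q1 = 0)
    (hL1 : 0 < det3 w b1 q1)
    (hL2 : 0 < det3 b2 w q1)
    (hc1 : det3 w b1 a1 < 0)
    (E1 : ∀ r ∈ segment ℝ q1 a1, r ∉ segment ℝ w b1)
    (E2 : ∀ r ∈ segment ℝ q1 a1, r ∉ segment ℝ w b2) :
    False := by
  set L10 := det3 w b1 q1 with hL10
  set c1 := det3 w b1 a1 with hc1d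
  set L20 := det3 b2 w q1 with hL20
  set c2 := det3 b2 w a1 with hc2d
  have hDwb : 0 < det3 w b1 b2 := by rw [det3_cyclic]; exact hD
  have hDbw : 0 < det3 b2 w b1 := by rw [det3_cyclic, det3_cyclic]; exact hD
  by_cases hcase : 0 ≤ L10 * c2 - L20 * c1
  · set t : ℝ := L10 / (L10 - c1) with ht
    have hden : 0 < L10 - c1 := by linarith
    have ht0 : 0 ≤ t := div_nonneg hL1.le hden.le
    have ht1 : t ≤ 1 := by rw [ht, div_le_one hden]; linarith
    set r : ℝ × ℝ := (1 - t) • q1 + t • a1 with hr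
    have hrseg : r ∈ segment ℝ q1 a1 := seg_mem ht0 ht1
    have h3 : det3 w b1 r = 0 := by
      rw [hr, det3_combo, ← hL10, ← hc1d, ht]; field_simp; ring
    have hb12r : 0 < det3 b1 b2 r := by
      rw [hr, det3_combo, hq0]
      have htpos : 0 < t := div_pos hL1 hden
      nlinarith
    have h1 : 0 ≤ det3 r b1 b2 := by rw [det3_cyclic]; exact hb12r.le
    have h2 : 0 ≤ det3 w r b2 := by
      rw [det3_cyclic, det3_cyclic]
      rw [hr, det3_combo, ← hL20, ← hc2d, ht]
      have e : (1 - L10/(L10-c1))*L20 + L10/(L10-c1)*c2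
          = (L10*c2 - L20*c1)/(L10-c1) := by field_simp; ring
      rw [e]
      exact div_nonneg hcase hden.le
    exact E1 r hrseg (mem_segment_of_dets hDwb h3 h1 h2)
  · push_neg at hcase
    have hc2 : c2 < 0 := by nlinarith
    set t : ℝ := L20 / (L20 - c2) with ht
    have hden : 0 < L20 - c2 := by linarith
    have ht0 : 0 ≤ t := div_nonneg hL2.le hden.le
    have ht1 : t ≤ 1 := by rw [ht, div_le_one hden]; linarith
    set r : ℝ × ℝ := (1 - t) • q1 + t • a1 with hr
    have hrseg : r ∈ segment ℝ q1 a1 := seg_mem ht0 ht1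
    have h3 : det3 b2 w r = 0 := by
      rw [hr, det3_combo, ← hL20, ← hc2d, ht]; field_simp; ring
    have hb12r : 0 < det3 b1 b2 r := by
      rw [hr, det3_combo, hq0]
      have htpos : 0 < t := div_pos hL2 hden
      nlinarith
    have h1 : 0 ≤ det3 r w b1 := by
      rw [det3_cyclic]
      rw [hr, det3_combo, ← hL10, ← hc1d, ht]
      have e : (1 - L20/(L20-c2))*L10 + L20/(L20-c2)*c1
          = (L20*c1 - L10*c2)/(L20-c2) := by field_simp; ring
      rw [e]
      apply div_nonneg _ hden.le
      linarith
    have h2 : 0 ≤ det3 b2 r b1 := by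
      rw [show det3 b2 r b1 = det3 b1 b2 r from (det3_cyclic b1 b2 r).symm]
      exact hb12r.le
    have : r ∈ segment ℝ b2 w := mem_segment_of_dets hDbw h3 h1 h2
    rw [segment_symm] at this
    exact E2 r hrseg this

lemma edge_facts {w b1 b2 q1 : ℝ × ℝ} (hD : 0 < det3 b1 b2 w) (hq1b1 : q1 ≠ b1) (hq1b2 : q1 ≠ b2)
    (hq1f : q1 ∈ segment ℝ b1 b2) :
    det3 b1 b2 q1 = 0 ∧ 0 < det3 w b1 q1 ∧ 0 < det3 b2 w q1 := by
  obtain ⟨s, hs0, hs1, rfl⟩ := seg_param hq1f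
  have hs0' : 0 < s := by
    rcases lt_or_eq_of_le hs0 with h | h
    · exact h
    · exfalso; apply hq1b1; rw [← h]; simp
  have hs1' : s < 1 := by
    rcases lt_or_eq_of_le hs1 with h | h
    · exact h
    · exfalso; apply hq1b2; rw [h]; simp
  refine ⟨?_, ?_, ?_⟩
  · rw [det3_combo, det3_left, det3_right]; ring
  · rw [det3_combo, det3_right, det3_cyclic w b1 b2]
    nlinarith
  · rw [det3_combo,
      show det3 b2 w b1 = det3 b1 b2 w from by rw [det3_cyclic b2 w b1, det3_cyclic w b1 b2],
      det3_left]
    nlinarith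

lemma opp_signs {V A1 : ℝ} (hV : V ≠ 0) (hA1 : A1 ≠ 0) {t : ℝ}
    (ht0 : 0 ≤ t) (ht1 : t ≤ 1) (heq : (1 - t) * V + t * A1 = 0) : V * A1 < 0 := by
  rcases eq_or_lt_of_le ht0 with h | h
  · exfalso; apply hV; rw [← h] at heq; linarith
  rcases eq_or_lt_of_le ht1 with h' | h'
  · exfalso; apply hA1; rw [h'] at heq; linarith
  have h1 : (1 - t) * (V * A1) = -(t * A1 ^ 2) := by linear_combination A1 * heq
  have h2 : 0 < A1 ^ 2 := by positivity
  nlinarith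

lemma combo_neg {A1 A2 m : ℝ} (h1 : A1 < 0) (h2 : A2 < 0) (hm0 : 0 ≤ m) (hm1 : m ≤ 1) :
    (1 - m) * A1 + m * A2 < 0 := by
  rcases le_total A1 A2 with h | h
  · nlinarith
  · nlinarith

lemma combo_pos {A1 A2 m : ℝ} (h1 : 0 < A1) (h2 : 0 < A2) (hm0 : 0 ≤ m) (hm1 : m ≤ 1) :
    0 < (1 - m) * A1 + m * A2 := by
  have := combo_neg (neg_neg_of_pos h1) (neg_neg_of_pos h2) hm0 hm1
  linarith

lemma stage2 {v a1 a2 w b1 b2 p1 q1 q2 : ℝ × ℝ}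
    (hD : 0 < det3 b1 b2 w)
    (hV : det3 b1 b2 v ≠ 0)
    (hA1 : det3 b1 b2 a1 ≠ 0)
    (hA2 : det3 b1 b2 a2 ≠ 0)
    (hW1 : det3 w b1 a1 ≠ 0)
    (hW2 : det3 w b1 a2 ≠ 0)
    (hq1b1 : q1 ≠ b1) (hq1b2 : q1 ≠ b2)
    (hq2b1 : q2 ≠ b1) (hq2b2 : q2 ≠ b2)
    (hq1 : q1 ∈ segment ℝ v a1) (hq1f : q1 ∈ segment ℝ b1 b2)
    (hq2 : q2 ∈ segment ℝ v a2) (hq2f : q2 ∈ segment ℝ b1 b2)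
    (hp1 : p1 ∈ segment ℝ a1 a2) (hp1e : p1 ∈ segment ℝ w b1)
    (E11 : ∀ r, r ∈ segment ℝ v a1 → r ∉ segment ℝ w b1)
    (E12 : ∀ r, r ∈ segment ℝ v a1 → r ∉ segment ℝ w b2)
    (E21 : ∀ r, r ∈ segment ℝ v a2 → r ∉ segment ℝ w b1)
    (E22 : ∀ r, r ∈ segment ℝ v a2 → r ∉ segment ℝ w b2) :
    False := by
  obtain ⟨hq10, hq1L1, hq1L2⟩ := edge_facts hD hq1b1 hq1b2 hq1f
  obtain ⟨hq20, hq2L1, hq2L2⟩ := edge_facts hD hq2b1 hq2b2 hq2f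
  -- p1 on segment w b1 : det3 b1 b2 p1 ≥ 0 and det3 w b1 p1 = 0
  obtain ⟨u, hu0, hu1, hup⟩ := seg_param hp1e
  have hp1f : 0 ≤ det3 b1 b2 p1 := by
    rw [hup, det3_combo, det3_left]
    nlinarith
  have hp1z : det3 w b1 p1 = 0 := by
    rw [hup, det3_combo, det3_left, det3_right]; ring
  -- signs of V, A1, A2
  obtain ⟨t1, ht10, ht11, htq1⟩ := seg_param hq1
  obtain ⟨t2, ht20, ht21, htq2⟩ := seg_param hq2
  have hVA1 : det3 b1 b2 v * det3 b1 b2 a1 < 0 := by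
    apply opp_signs hV hA1 ht10 ht11
    rw [← det3_combo, ← htq1]; exact hq10
  have hVA2 : det3 b1 b2 v * det3 b1 b2 a2 < 0 := by
    apply opp_signs hV hA2 ht20 ht21
    rw [← det3_combo, ← htq2]; exact hq20
  -- A1 > 0
  obtain ⟨m, hm0, hm1, hmp⟩ := seg_param hp1
  have hA1pos : 0 < det3 b1 b2 a1 := by
    rcases lt_or_gt_of_ne hA1 with hneg | hpos
    · exfalso
      have hA2neg : det3 b1 b2 a2 < 0 := by nlinarith
      have : det3 b1 b2 p1 < 0 := by
        rw [hmp, det3_combo]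
        exact combo_neg hneg hA2neg hm0 hm1
      linarith
    · exact hpos
  have hA2pos : 0 < det3 b1 b2 a2 := by
    rcases lt_or_gt_of_ne hA2 with hneg | hpos
    · exfalso; nlinarith
    · exact hpos
  -- W1, W2 > 0 via no_exit
  have hsub1 : segment ℝ q1 a1 ⊆ segment ℝ v a1 :=
    (convex_segment v a1).segment_subset hq1 (right_mem_segment ℝ v a1)
  have hsub2 : segment ℝ q2 a2 ⊆ segment ℝ v a2 :=
    (convex_segment v a2).segment_subset hq2 (right_mem_segment ℝ v a2)
  have hW1pos : 0 < det3 w b1 a1 := by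
    rcases lt_or_gt_of_ne hW1 with hneg | hpos
    · exact absurd (no_exit hD hA1pos hq10 hq1L1 hq1L2 hneg
        (fun r hr => E11 r (hsub1 hr)) (fun r hr => E12 r (hsub1 hr))) not_false
    · exact hpos
  have hW2pos : 0 < det3 w b1 a2 := by
    rcases lt_or_gt_of_ne hW2 with hneg | hpos
    · exact absurd (no_exit hD hA2pos hq20 hq2L1 hq2L2 hneg
        (fun r hr => E21 r (hsub2 hr)) (fun r hr => E22 r (hsub2 hr))) not_false
    · exact hpos
  -- final contradiction
  have : 0 < det3 w b1 p1 := by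
    rw [hmp, det3_combo]
    exact combo_pos hW1pos hW2pos hm0 hm1
  linarith

lemma side_nonneg {P0 P1 P2 u : ℝ × ℝ}
    (hu : u ∈ segment ℝ P1 P2 ∨ u ∈ segment ℝ P2 P0 ∨ u ∈ segment ℝ P0 P1) :
    0 ≤ det3 P1 P2 P0 * det3 P1 P2 u := by
  rcases hu with h | h | h
  · obtain ⟨t, _, _, rfl⟩ := seg_param h
    rw [det3_combo, det3_left, det3_right]
    nlinarith
  · obtain ⟨t, ht0, _, rfl⟩ := seg_param h
    rw [det3_combo, det3_right]
    nlinarith [sq_nonneg (det3 P1 P2 P0)]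
  · obtain ⟨t, _, ht1, rfl⟩ := seg_param h
    rw [det3_combo, det3_left]
    nlinarith [sq_nonneg (det3 P1 P2 P0)]

lemma between_params {c d x y z : ℝ × ℝ} {tx ty tz : ℝ}
    (hx : x = (1 - tx) • c + tx • d) (hy : y = (1 - ty) • c + ty • d)
    (hz : z = (1 - tz) • c + tz • d)
    (h1 : tx ≤ ty) (h2 : ty ≤ tz) (hxz : x ≠ z) :
    ∃ s : ℝ, 0 ≤ s ∧ s ≤ 1 ∧ y = (1 - s) • x + s • z := by
  have htxz : tx < tz := by
    rcases lt_or_eq_of_le (le_trans h1 h2) with h | h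
    · exact h
    · exact absurd (by rw [hx, hz, h]) hxz
  refine ⟨(ty - tx) / (tz - tx), div_nonneg (by linarith) (by linarith),
    (div_le_one (by linarith)).2 (by linarith), ?_⟩
  have hd : tz - tx ≠ 0 := by linarith
  rw [hx, hy, hz]
  refine Prod.ext ?_ ?_ <;>
    simp only [Prod.fst_add, Prod.snd_add, Prod.smul_fst, Prod.smul_snd, smul_eq_mul] <;>
    field_simp <;> ring

lemma mid_kill {c d P0 P1 P2 x y z : ℝ × ℝ}
    (hG : det3 P1 P2 P0 ≠ 0) (hcc : det3 P1 P2 c ≠ 0)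
    (hxcd : x ∈ segment ℝ c d) (hzcd : z ∈ segment ℝ c d)
    (hyedge : y ∈ segment ℝ P1 P2)
    (hxU : 0 ≤ det3 P1 P2 P0 * det3 P1 P2 x)
    (hzU : 0 ≤ det3 P1 P2 P0 * det3 P1 P2 z)
    {s : ℝ} (hs0 : 0 ≤ s) (hs1 : s ≤ 1) (hmid : y = (1 - s) • x + s • z)
    (hyx : y ≠ x) (hyz : y ≠ z) (hxz : x ≠ z) : False := by
  have hy0 : det3 P1 P2 y = 0 := by
    obtain ⟨t, _, _, rfl⟩ := seg_param hyedge
    rw [det3_combo, det3_left, det3_right]; ring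
  have hcomb : (1 - s) * det3 P1 P2 x + s * det3 P1 P2 z = 0 := by
    rw [← det3_combo, ← hmid]; exact hy0
  have hs0' : 0 < s := by
    rcases lt_or_eq_of_le hs0 with h | h
    · exact h
    · exfalso; apply hyx; rw [hmid, ← h]; simp
  have hs1' : s < 1 := by
    rcases lt_or_eq_of_le hs1 with h | h
    · exact h
    · exfalso; apply hyz; rw [hmid, h]; simp
  have hx0 : det3 P1 P2 x = 0 := by
    have h1 : (1 - s) * (det3 P1 P2 P0 * det3 P1 P2 x) = 0 := by
      have h2 : (1 - s) * (det3 P1 P2 P0 * det3 P1 P2 x)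
          + s * (det3 P1 P2 P0 * det3 P1 P2 z) = 0 := by
        linear_combination det3 P1 P2 P0 * hcomb
      nlinarith [mul_nonneg hs0 hzU, mul_nonneg (by linarith : (0:ℝ) ≤ 1 - s) hxU]
    have h3 : det3 P1 P2 P0 * det3 P1 P2 x = 0 := by
      rcases mul_eq_zero.1 h1 with h | h
      · linarith
      · exact h
    rcases mul_eq_zero.1 h3 with h | h
    · exact absurd h hG
    · exact h
  have hz0 : det3 P1 P2 z = 0 := by
    have h : s * det3 P1 P2 z = 0 := by linear_combination hcomb - (1 - s) * hx0
    rcases mul_eq_zero.1 h with h' | h'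
    · exact absurd h' (ne_of_gt hs0')
    · exact h'
  obtain ⟨tx, _, _, hxr⟩ := seg_param hxcd
  obtain ⟨tz, _, _, hzr⟩ := seg_param hzcd
  have htxz : tx ≠ tz := by
    intro h; apply hxz; rw [hxr, hzr, h]
  rw [hxr, det3_combo] at hx0
  rw [hzr, det3_combo] at hz0
  apply hcc
  have hcd : det3 P1 P2 c = det3 P1 P2 d := by
    rcases mul_eq_zero.1 (show (tz - tx) * (det3 P1 P2 d - det3 P1 P2 c) = 0 by
      linear_combination hz0 - hx0) with h | h
    · exact absurd (by linarith) htxz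
    · linarith
  linear_combination hx0 + tx * hcd

lemma or_rot {A B C : Prop} (h : A ∨ B ∨ C) : B ∨ C ∨ A := by tauto

lemma no_three {c d P0 P1 P2 x y z : ℝ × ℝ}
    (hG : det3 P1 P2 P0 ≠ 0)
    (hc0 : det3 P1 P2 c ≠ 0) (hc1 : det3 P2 P0 c ≠ 0) (hc2 : det3 P0 P1 c ≠ 0)
    (hx : x ∈ segment ℝ c d) (hy : y ∈ segment ℝ c d) (hz : z ∈ segment ℝ c d)
    (hxU : x ∈ segment ℝ P1 P2 ∨ x ∈ segment ℝ P2 P0 ∨ x ∈ segment ℝ P0 P1)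
    (hyU : y ∈ segment ℝ P1 P2 ∨ y ∈ segment ℝ P2 P0 ∨ y ∈ segment ℝ P0 P1)
    (hzU : z ∈ segment ℝ P1 P2 ∨ z ∈ segment ℝ P2 P0 ∨ z ∈ segment ℝ P0 P1)
    (hxy : x ≠ y) (hxz : x ≠ z) (hyz : y ≠ z) : False := by
  have hG1 : det3 P2 P0 P1 ≠ 0 := by rw [← det3_cyclic]; exact hG
  have hG2 : det3 P0 P1 P2 ≠ 0 := by rw [det3_cyclic]; exact hG
  have kill : ∀ X Y Z : ℝ × ℝ, X ∈ segment ℝ c d → Z ∈ segment ℝ c d →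
      (X ∈ segment ℝ P1 P2 ∨ X ∈ segment ℝ P2 P0 ∨ X ∈ segment ℝ P0 P1) →
      (Y ∈ segment ℝ P1 P2 ∨ Y ∈ segment ℝ P2 P0 ∨ Y ∈ segment ℝ P0 P1) →
      (Z ∈ segment ℝ P1 P2 ∨ Z ∈ segment ℝ P2 P0 ∨ Z ∈ segment ℝ P0 P1) →
      (∃ s : ℝ, 0 ≤ s ∧ s ≤ 1 ∧ Y = (1 - s) • X + s • Z) →
      Y ≠ X → Y ≠ Z → X ≠ Z → False := by
    intro X Y Z hXcd hZcd hXU hYU hZU ⟨s, hs0, hs1, hmid⟩ hYX hYZ hXZ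
    rcases hYU with hYe | hYe | hYe
    · exact mid_kill hG hc0 hXcd hZcd hYe (side_nonneg hXU) (side_nonneg hZU)
        hs0 hs1 hmid hYX hYZ hXZ
    · have sX : 0 ≤ det3 P2 P0 P1 * det3 P2 P0 X :=
        side_nonneg (P0 := P1) (P1 := P2) (P2 := P0) (u := X) (or_rot hXU)
      have sZ : 0 ≤ det3 P2 P0 P1 * det3 P2 P0 Z :=
        side_nonneg (P0 := P1) (P1 := P2) (P2 := P0) (u := Z) (or_rot hZU)
      exact mid_kill hG1 hc1 hXcd hZcd hYe sX sZ hs0 hs1 hmid hYX hYZ hXZ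
    · have sX : 0 ≤ det3 P0 P1 P2 * det3 P0 P1 X :=
        side_nonneg (P0 := P2) (P1 := P0) (P2 := P1) (u := X) (or_rot (or_rot hXU))
      have sZ : 0 ≤ det3 P0 P1 P2 * det3 P0 P1 Z :=
        side_nonneg (P0 := P2) (P1 := P0) (P2 := P1) (u := Z) (or_rot (or_rot hZU))
      exact mid_kill hG2 hc2 hXcd hZcd hYe sX sZ hs0 hs1 hmid hYX hYZ hXZ
  obtain ⟨tx, htx0, htx1, hxr⟩ := seg_param hx
  obtain ⟨ty, hty0, hty1, hyr⟩ := seg_param hy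
  obtain ⟨tz, htz0, htz1, hzr⟩ := seg_param hz
  rcases le_total tx ty with h1 | h1 <;> rcases le_total ty tz with h2 | h2 <;>
    rcases le_total tx tz with h3 | h3
  · exact kill x y z hx hz hxU hyU hzU (between_params hxr hyr hzr h1 h2 hxz) hxy.symm hyz hxz
  · exact kill x y z hx hz hxU hyU hzU (between_params hxr hyr hzr h1 h2 hxz) hxy.symm hyz hxz
  · exact kill x z y hx hy hxU hzU hyU (between_params hxr hzr hyr h3 h2 hxy) hxz.symm hyz.symm hxy
  · exact kill z x y hz hy hzU hxU hyU (between_params hzr hxr hyr h3 h1 hyz.symm) hxz hxy hyz.symm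
  · exact kill y x z hy hz hyU hxU hzU (between_params hyr hxr hzr h1 h3 hyz) hxy hxz hyz
  · exact kill y z x hy hx hyU hzU hxU (between_params hyr hzr hxr h2 h3 hxy.symm) hyz.symm hxz.symm hxy.symm
  · exact kill z y x hz hx hzU hyU hxU (between_params hzr hyr hxr h2 h1 hxz.symm) hyz hxy.symm hxz.symm
  · exact kill z y x hz hx hzU hyU hxU (between_params hzr hyr hxr h2 h1 hxz.symm) hyz hxy.symm hxz.symm

lemma det3_swap (p q r : ℝ × ℝ) : det3 p q r = -det3 q p r := by
  simp only [det3]; ring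

lemma seg_det0 {x y z : ℝ × ℝ} (h : z ∈ segment ℝ x y) : det3 x y z = 0 := by
  obtain ⟨t, _, _, rfl⟩ := seg_param h
  rw [det3_combo, det3_left, det3_right]; ring

lemma collapse {c d e f x y : ℝ × ℝ} (hx1 : x ∈ segment ℝ c d) (hx2 : x ∈ segment ℝ e f)
    (hy1 : y ∈ segment ℝ c d) (hy2 : y ∈ segment ℝ e f) (hxy : x ≠ y) :
    det3 e f c = 0 := by
  have hx0 : det3 e f x = 0 := seg_det0 hx2
  have hy0 : det3 e f y = 0 := seg_det0 hy2
  obtain ⟨tx, _, _, hxr⟩ := seg_param hx1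
  obtain ⟨ty, _, _, hyr⟩ := seg_param hy1
  have htxy : tx ≠ ty := by intro h; apply hxy; rw [hxr, hyr, h]
  rw [hxr, det3_combo] at hx0
  rw [hyr, det3_combo] at hy0
  have hcd : det3 e f c = det3 e f d := by
    rcases mul_eq_zero.1 (show (ty - tx) * (det3 e f d - det3 e f c) = 0 by
      linear_combination hy0 - hx0) with h | h
    · exact absurd (by linarith) htxy
    · linarith
  linear_combination hx0 + tx * hcd
/-- No three distinct points of `s` are collinear. -/
def GenPos (s : Set (ℝ × ℝ)) : Prop :=
  ∀ p ∈ s, ∀ q ∈ s, ∀ r ∈ s, p ≠ q → p ≠ r → q ≠ r → ¬ Collinear ℝ ({p, q, r} : Set (ℝ × ℝ))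

theorem no_trees_when_four_crossings (a b : Fin 3 → ℝ × ℝ)
    (ha : Function.Injective a) (hb : Function.Injective b) (hab : ∀ i j, a i ≠ b j)
    (hgp : GenPos (Set.range a ∪ Set.range b))
    (EA EB : Fin 3 → Set (ℝ × ℝ))
    (hEA : ∀ i, EA i = segment ℝ (a (i + 1)) (a (i + 2)))
    (hEB : ∀ i, EB i = segment ℝ (b (i + 1)) (b (i + 2)))
    (hcard : 4 ≤ ((⋃ i, EA i) ∩ (⋃ j, EB j)).ncard) :
    ¬ ∃ oA oB : Fin 3, ∀ i, i ≠ oA → ∀ j, j ≠ oB → EA i ∩ EB j = ∅ := by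
  rintro ⟨oA, oB, hfree⟩
  have f3 : ∀ o : Fin 3, o + 1 + 2 = o := by decide
  have f3' : ∀ o : Fin 3, o + 2 + 1 = o := by decide
  have f3'' : ∀ o : Fin 3, o + 2 + 2 = o + 1 := by decide
  have f3''' : ∀ o : Fin 3, o + 1 + 1 = o + 2 := by decide
  have fne1 : ∀ o : Fin 3, o + 1 ≠ o := by decide
  have fne2 : ∀ o : Fin 3, o + 2 ≠ o := by decide
  have fne12 : ∀ o : Fin 3, o + 1 ≠ o + 2 := by decide
  have fcases : ∀ o j : Fin 3, j = o ∨ j = o + 1 ∨ j = o + 2 := by decide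
  have hmem : ∀ i : Fin 3, a i ∈ Set.range a ∪ Set.range b := fun i => Or.inl ⟨i, rfl⟩
  have hmem' : ∀ i : Fin 3, b i ∈ Set.range a ∪ Set.range b := fun i => Or.inr ⟨i, rfl⟩
  have hdaab : ∀ i j k : Fin 3, i ≠ j → det3 (a i) (a j) (b k) ≠ 0 := by
    intro i j k hij h0
    exact hgp _ (hmem i) _ (hmem j) _ (hmem' k) (fun h => hij (ha h)) (hab i k) (hab j k)
      (collinear_of_det3 h0)
  have hdbba : ∀ i j k : Fin 3, i ≠ j → det3 (b i) (b j) (a k) ≠ 0 := by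
    intro i j k hij h0
    exact hgp _ (hmem' i) _ (hmem' j) _ (hmem k) (fun h => hij (hb h)) (Ne.symm (hab k i))
      (Ne.symm (hab k j)) (collinear_of_det3 h0)
  have hdaaa : ∀ i j k : Fin 3, i ≠ j → i ≠ k → j ≠ k → det3 (a i) (a j) (a k) ≠ 0 := by
    intro i j k h1 h2 h3 h0
    exact hgp _ (hmem i) _ (hmem j) _ (hmem k) (fun h => h1 (ha h)) (fun h => h2 (ha h))
      (fun h => h3 (ha h)) (collinear_of_det3 h0)
  have hdbbb : ∀ i j k : Fin 3, i ≠ j → i ≠ k → j ≠ k → det3 (b i) (b j) (b k) ≠ 0 := by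
    intro i j k h1 h2 h3 h0
    exact hgp _ (hmem' i) _ (hmem' j) _ (hmem' k) (fun h => h1 (hb h)) (fun h => h2 (hb h))
      (fun h => h3 (hb h)) (collinear_of_det3 h0)
  set S := (⋃ i, EA i) ∩ (⋃ j, EB j) with hSdef
  have hUB : ∀ x, x ∈ (⋃ j, EB j) →
      x ∈ segment ℝ (b (oB+1)) (b (oB+2)) ∨ x ∈ segment ℝ (b (oB+2)) (b oB) ∨
        x ∈ segment ℝ (b oB) (b (oB+1)) := by
    intro x hx
    rw [Set.mem_iUnion] at hx
    obtain ⟨j, hj⟩ := hx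
    rw [hEB j] at hj
    rcases fcases oB j with h | h | h
    · subst h; exact Or.inl hj
    · subst h; rw [f3''' oB, f3 oB] at hj; exact Or.inr (Or.inl hj)
    · subst h; rw [f3' oB, f3'' oB] at hj; exact Or.inr (Or.inr hj)
  have hUA : ∀ x, x ∈ (⋃ i, EA i) →
      x ∈ segment ℝ (a (oA+1)) (a (oA+2)) ∨ x ∈ segment ℝ (a (oA+2)) (a oA) ∨
        x ∈ segment ℝ (a oA) (a (oA+1)) := by
    intro x hx
    rw [Set.mem_iUnion] at hx
    obtain ⟨i, hi⟩ := hx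
    rw [hEA i] at hi
    rcases fcases oA i with h | h | h
    · subst h; exact Or.inl hi
    · subst h; rw [f3''' oA, f3 oA] at hi; exact Or.inr (Or.inl hi)
    · subst h; rw [f3' oA, f3'' oA] at hi; exact Or.inr (Or.inr hi)
  have hclass : ∀ x, x ∈ S → x ∈ EA oA ∨ x ∈ EB oB := by
    intro x hx
    obtain ⟨hxA, hxB⟩ := hx
    rw [Set.mem_iUnion] at hxA hxB
    obtain ⟨i, hi⟩ := hxA
    obtain ⟨j, hj⟩ := hxB
    by_cases hiA : i = oA
    · left; rwa [hiA] at hi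
    · by_cases hjB : j = oB
      · right; rwa [hjB] at hj
      · have h := Set.mem_inter hi hj
        rw [hfree i hiA j hjB] at h
        exact absurd h (Set.notMem_empty x)
  have no3S1 : ∀ x y z, x ∈ S → y ∈ S → z ∈ S → x ∈ EA oA → y ∈ EA oA → z ∈ EA oA →
      x ≠ y → x ≠ z → y ≠ z → False := by
    intro x y z hxS hyS hzS hxA hyA hzA hxy hxz hyz
    rw [hEA oA] at hxA hyA hzA
    exact no_three (P0 := b oB) (P1 := b (oB+1)) (P2 := b (oB+2))
      (hdbbb _ _ _ (fne12 oB) (fne1 oB) (fne2 oB))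
      (hdbba _ _ _ (fne12 oB)) (hdbba _ _ _ (fne2 oB)) (hdbba _ _ _ (Ne.symm (fne1 oB)))
      hxA hyA hzA (hUB x hxS.2) (hUB y hyS.2) (hUB z hzS.2) hxy hxz hyz
  have no3S2 : ∀ x y z, x ∈ S → y ∈ S → z ∈ S → x ∈ EB oB → y ∈ EB oB → z ∈ EB oB →
      x ≠ y → x ≠ z → y ≠ z → False := by
    intro x y z hxS hyS hzS hxB hyB hzB hxy hxz hyz
    rw [hEB oB] at hxB hyB hzB
    exact no_three (P0 := a oA) (P1 := a (oA+1)) (P2 := a (oA+2))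
      (hdaaa _ _ _ (fne12 oA) (fne1 oA) (fne2 oA))
      (hdaab _ _ _ (fne12 oA)) (hdaab _ _ _ (fne2 oA)) (hdaab _ _ _ (Ne.symm (fne1 oA)))
      hxB hyB hzB (hUA x hxS.1) (hUA y hyS.1) (hUA z hzS.1) hxy hxz hyz
  have hEA1 : EA (oA + 1) = segment ℝ (a (oA+2)) (a oA) := by
    rw [hEA (oA+1), f3''' oA, f3 oA]
  have hEA2 : EA (oA + 2) = segment ℝ (a oA) (a (oA+1)) := by
    rw [hEA (oA+2), f3' oA, f3'' oA]
  have hEB1 : EB (oB + 1) = segment ℝ (b (oB+2)) (b oB) := by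
    rw [hEB (oB+1), f3''' oB, f3 oB]
  have hEB2 : EB (oB + 2) = segment ℝ (b oB) (b (oB+1)) := by
    rw [hEB (oB+2), f3' oB, f3'' oB]
  have hE : ∀ (i' j' : Fin 3), i' ≠ oA → j' ≠ oB → ∀ r, r ∈ EA i' → r ∈ EB j' → False := by
    intro i' j' hi hj r h1 h2
    have h := Set.mem_inter h1 h2
    rw [hfree i' hi j' hj] at h
    exact absurd h (Set.notMem_empty r)
  have main : ∀ p1 p2 q1 q2, p1 ∈ S → p2 ∈ S → q1 ∈ S → q2 ∈ S →
      p1 ∈ EA oA → p2 ∈ EA oA → q1 ∈ EB oB → q2 ∈ EB oB →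
      p1 ≠ p2 → p1 ≠ q1 → p1 ≠ q2 → p2 ≠ q1 → p2 ≠ q2 → q1 ≠ q2 → False := by
    intro p1 p2 q1 q2 hp1S hp2S hq1S hq2S hp1A hp2A hq1B hq2B h12 hp1q1 hp1q2 hp2q1 hp2q2 hq12
    have hp1nB : p1 ∉ EB oB := fun h =>
      no3S2 q1 q2 p1 hq1S hq2S hp1S hq1B hq2B h hq12 hp1q1.symm hp1q2.symm
    have hp2nB : p2 ∉ EB oB := fun h =>
      no3S2 q1 q2 p2 hq1S hq2S hp2S hq1B hq2B h hq12 hp2q1.symm hp2q2.symm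
    have hq1nA : q1 ∉ EA oA := fun h =>
      no3S1 p1 p2 q1 hp1S hp2S hq1S hp1A hp2A h h12 hp1q1 hp2q1
    have hq2nA : q2 ∉ EA oA := fun h =>
      no3S1 p1 p2 q2 hp1S hp2S hq2S hp1A hp2A h h12 hp1q2 hp2q2
    have hedgeP : ∀ p, p ∈ S → p ∉ EB oB →
        p ∈ segment ℝ (b (oB+2)) (b oB) ∨ p ∈ segment ℝ (b oB) (b (oB+1)) := by
      intro p hpS hpn
      rcases hUB p hpS.2 with h | h | h
      · exact absurd (by rw [hEB oB]; exact h) hpn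
      · exact Or.inl h
      · exact Or.inr h
    have hedgeQ : ∀ q, q ∈ S → q ∉ EA oA →
        q ∈ segment ℝ (a (oA+2)) (a oA) ∨ q ∈ segment ℝ (a oA) (a (oA+1)) := by
      intro q hqS hqn
      rcases hUA q hqS.1 with h | h | h
      · exact absurd (by rw [hEA oA]; exact h) hqn
      · exact Or.inl h
      · exact Or.inr h
    rw [hEA oA] at hp1A hp2A
    rw [hEB oB] at hq1B hq2B
    obtain ⟨Q1, Q2, hQ12, hQ1B, hQ2B, hQ1e, hQ2e⟩ :
        ∃ Q1 Q2, Q1 ≠ Q2 ∧ Q1 ∈ segment ℝ (b (oB+1)) (b (oB+2)) ∧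
          Q2 ∈ segment ℝ (b (oB+1)) (b (oB+2)) ∧
          Q1 ∈ segment ℝ (a oA) (a (oA+1)) ∧ Q2 ∈ segment ℝ (a oA) (a (oA+2)) := by
      rcases hedgeQ q1 hq1S hq1nA with h1 | h1 <;> rcases hedgeQ q2 hq2S hq2nA with h2 | h2
      · exact absurd (collapse hq1B h1 hq2B h2 hq12) (hdaab (oA+2) oA (oB+1) (fne2 oA))
      · exact ⟨q2, q1, hq12.symm, hq2B, hq1B, h2, by rwa [segment_symm] at h1⟩
      · exact ⟨q1, q2, hq12, hq1B, hq2B, h1, by rwa [segment_symm] at h2⟩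
      · exact absurd (collapse hq1B h1 hq2B h2 hq12) (hdaab oA (oA+1) (oB+1) (Ne.symm (fne1 oA)))
    obtain ⟨R1, R2, hR1A, hR1e, hR2A, hR2e⟩ :
        ∃ R1 R2, R1 ∈ segment ℝ (a (oA+1)) (a (oA+2)) ∧ R1 ∈ segment ℝ (b oB) (b (oB+1)) ∧
          R2 ∈ segment ℝ (a (oA+1)) (a (oA+2)) ∧ R2 ∈ segment ℝ (b oB) (b (oB+2)) := by
      rcases hedgeP p1 hp1S hp1nB with h1 | h1 <;> rcases hedgeP p2 hp2S hp2nB with h2 | h2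
      · exact absurd (collapse hp1A h1 hp2A h2 h12) (hdbba (oB+2) oB (oA+1) (fne2 oB))
      · exact ⟨p2, p1, hp2A, h2, hp1A, by rwa [segment_symm] at h1⟩
      · exact ⟨p1, p2, hp1A, h1, hp2A, by rwa [segment_symm] at h2⟩
      · exact absurd (collapse hp1A h1 hp2A h2 h12) (hdbba oB (oB+1) (oA+1) (Ne.symm (fne1 oB)))
    have hQ1B1 : Q1 ≠ b (oB+1) := fun h =>
      hdaab oA (oA+1) (oB+1) (Ne.symm (fne1 oA)) (seg_det0 (h ▸ hQ1e))
    have hQ1B2 : Q1 ≠ b (oB+2) := fun h =>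
      hdaab oA (oA+1) (oB+2) (Ne.symm (fne1 oA)) (seg_det0 (h ▸ hQ1e))
    have hQ2B1 : Q2 ≠ b (oB+1) := fun h =>
      hdaab oA (oA+2) (oB+1) (Ne.symm (fne2 oA)) (seg_det0 (h ▸ hQ2e))
    have hQ2B2 : Q2 ≠ b (oB+2) := fun h =>
      hdaab oA (oA+2) (oB+2) (Ne.symm (fne2 oA)) (seg_det0 (h ▸ hQ2e))
    have E11 : ∀ r, r ∈ segment ℝ (a oA) (a (oA+1)) → r ∉ segment ℝ (b oB) (b (oB+1)) :=
      fun r h1 h2 => hE (oA+2) (oB+2) (fne2 oA) (fne2 oB) r (by rw [hEA2]; exact h1)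
        (by rw [hEB2]; exact h2)
    have E12 : ∀ r, r ∈ segment ℝ (a oA) (a (oA+1)) → r ∉ segment ℝ (b oB) (b (oB+2)) :=
      fun r h1 h2 => hE (oA+2) (oB+1) (fne2 oA) (fne1 oB) r (by rw [hEA2]; exact h1)
        (by rw [hEB1, segment_symm]; exact h2)
    have E21 : ∀ r, r ∈ segment ℝ (a oA) (a (oA+2)) → r ∉ segment ℝ (b oB) (b (oB+1)) :=
      fun r h1 h2 => hE (oA+1) (oB+2) (fne1 oA) (fne2 oB) r
        (by rw [hEA1, segment_symm]; exact h1) (by rw [hEB2]; exact h2)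
    have E22 : ∀ r, r ∈ segment ℝ (a oA) (a (oA+2)) → r ∉ segment ℝ (b oB) (b (oB+2)) :=
      fun r h1 h2 => hE (oA+1) (oB+1) (fne1 oA) (fne1 oB) r
        (by rw [hEA1, segment_symm]; exact h1) (by rw [hEB1, segment_symm]; exact h2)
    have hD0 : det3 (b (oB+1)) (b (oB+2)) (b oB) ≠ 0 :=
      hdbbb _ _ _ (fne12 oB) (fne1 oB) (fne2 oB)
    rcases lt_or_gt_of_ne hD0 with hDneg | hDpos
    · refine stage2 (v := a oA) (a1 := a (oA+1)) (a2 := a (oA+2)) (w := b oB)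
        (b1 := b (oB+2)) (b2 := b (oB+1)) (p1 := R2) (q1 := Q1) (q2 := Q2)
        (by rw [det3_swap]; linarith)
        (hdbba _ _ _ (Ne.symm (fne12 oB))) (hdbba _ _ _ (Ne.symm (fne12 oB)))
        (hdbba _ _ _ (Ne.symm (fne12 oB)))
        (hdbba oB (oB+2) _ (Ne.symm (fne2 oB))) (hdbba oB (oB+2) _ (Ne.symm (fne2 oB)))
        hQ1B2 hQ1B1 hQ2B2 hQ2B1
        hQ1e (by rwa [segment_symm] at hQ1B) hQ2e (by rwa [segment_symm] at hQ2B)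
        hR2A hR2e
        (fun r h => E12 r h) (fun r h => E11 r h) (fun r h => E22 r h) (fun r h => E21 r h)
    · refine stage2 (v := a oA) (a1 := a (oA+1)) (a2 := a (oA+2)) (w := b oB)
        (b1 := b (oB+1)) (b2 := b (oB+2)) (p1 := R1) (q1 := Q1) (q2 := Q2)
        hDpos
        (hdbba _ _ _ (fne12 oB)) (hdbba _ _ _ (fne12 oB)) (hdbba _ _ _ (fne12 oB))
        (hdbba oB (oB+1) _ (Ne.symm (fne1 oB))) (hdbba oB (oB+1) _ (Ne.symm (fne1 oB)))
        hQ1B1 hQ1B2 hQ2B1 hQ2B2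
        hQ1e hQ1B hQ2e hQ2B
        hR1A hR1e
        (fun r h => E11 r h) (fun r h => E12 r h) (fun r h => E21 r h) (fun r h => E22 r h)
  -- extract four distinct points of S
  classical
  have hfin : S.Finite := by
    rcases S.finite_or_infinite with h | h
    · exact h
    · rw [Set.Infinite.ncard h] at hcard; omega
  have hFc : 4 ≤ hfin.toFinset.card := by
    rwa [Set.ncard_eq_toFinset_card S hfin] at hcard
  obtain ⟨x1, hx1⟩ := Finset.card_pos.1 (show 0 < hfin.toFinset.card by omega)
  have hc2 : 0 < (hfin.toFinset.erase x1).card := by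
    rw [Finset.card_erase_of_mem hx1]; omega
  obtain ⟨x2, hx2⟩ := Finset.card_pos.1 hc2
  have hc3 : 0 < ((hfin.toFinset.erase x1).erase x2).card := by
    rw [Finset.card_erase_of_mem hx2, Finset.card_erase_of_mem hx1]; omega
  obtain ⟨x3, hx3⟩ := Finset.card_pos.1 hc3
  have hc4 : 0 < (((hfin.toFinset.erase x1).erase x2).erase x3).card := by
    rw [Finset.card_erase_of_mem hx3, Finset.card_erase_of_mem hx2,
      Finset.card_erase_of_mem hx1]; omega
  obtain ⟨x4, hx4⟩ := Finset.card_pos.1 hc4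
  rw [Finset.mem_erase] at hx2
  rw [Finset.mem_erase, Finset.mem_erase] at hx3
  rw [Finset.mem_erase, Finset.mem_erase, Finset.mem_erase] at hx4
  have hx1S : x1 ∈ S := hfin.mem_toFinset.1 hx1
  have hx2S : x2 ∈ S := hfin.mem_toFinset.1 hx2.2
  have hx3S : x3 ∈ S := hfin.mem_toFinset.1 hx3.2.2
  have hx4S : x4 ∈ S := hfin.mem_toFinset.1 hx4.2.2.2
  have hd12 : x1 ≠ x2 := (hx2.1).symm
  have hd13 : x1 ≠ x3 := (hx3.2.1).symm
  have hd23 : x2 ≠ x3 := (hx3.1).symm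
  have hd14 : x1 ≠ x4 := (hx4.2.2.1).symm
  have hd24 : x2 ≠ x4 := (hx4.2.1).symm
  have hd34 : x3 ≠ x4 := (hx4.1).symm
  rcases hclass x1 hx1S with c1 | c1 <;> rcases hclass x2 hx2S with c2 | c2 <;>
    rcases hclass x3 hx3S with c3 | c3 <;> rcases hclass x4 hx4S with c4 | c4
  · exact no3S1 x1 x2 x3 hx1S hx2S hx3S c1 c2 c3 hd12 hd13 hd23
  · exact no3S1 x1 x2 x3 hx1S hx2S hx3S c1 c2 c3 hd12 hd13 hd23
  · exact no3S1 x1 x2 x4 hx1S hx2S hx4S c1 c2 c4 hd12 hd14 hd24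
  · exact main x1 x2 x3 x4 hx1S hx2S hx3S hx4S c1 c2 c3 c4 hd12 hd13 hd14 hd23 hd24 hd34
  · exact no3S1 x1 x3 x4 hx1S hx3S hx4S c1 c3 c4 hd13 hd14 hd34
  · exact main x1 x3 x2 x4 hx1S hx3S hx2S hx4S c1 c3 c2 c4 hd13 hd12 hd14 hd23.symm hd34 hd24
  · exact main x1 x4 x2 x3 hx1S hx4S hx2S hx3S c1 c4 c2 c3 hd14 hd12 hd13 hd24.symm hd34.symm hd23
  · exact no3S2 x2 x3 x4 hx2S hx3S hx4S c2 c3 c4 hd23 hd24 hd34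
  · exact no3S1 x2 x3 x4 hx2S hx3S hx4S c2 c3 c4 hd23 hd24 hd34
  · exact main x2 x3 x1 x4 hx2S hx3S hx1S hx4S c2 c3 c1 c4 hd23 hd12.symm hd24 hd13.symm hd34 hd14
  · exact main x2 x4 x1 x3 hx2S hx4S hx1S hx3S c2 c4 c1 c3 hd24 hd12.symm hd23 hd14.symm hd34.symm hd13
  · exact no3S2 x1 x3 x4 hx1S hx3S hx4S c1 c3 c4 hd13 hd14 hd34
  · exact main x3 x4 x1 x2 hx3S hx4S hx1S hx2S c3 c4 c1 c2 hd34 hd13.symm hd23.symm hd14.symm hd24.symm hd12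
  · exact no3S2 x1 x2 x4 hx1S hx2S hx4S c1 c2 c4 hd12 hd14 hd24
  · exact no3S2 x1 x2 x3 hx1S hx2S hx3S c1 c2 c3 hd12 hd13 hd23
  · exact no3S2 x1 x2 x3 hx1S hx2S hx3S c1 c2 c3 hd12 hd13 hd23
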